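/- For λ > 0 and τ ∈ ℝ with |τ| ≠ λ, the integral g_τ(x, λ) = ∫_ℝ e^{2πi x ξ}/((ξ+iτ)² + λ²) dξ, for τ > 0, equals (π e^{2πτx}/λ)(e^{−2πλ|x|} − e^{−2πλx}) if 0 < λ < τ, and (π e^{2πτx}/λ) e^{−2πλ|x|} if λ > τ. -/

import Mathlib

open Real

section Stmt7Aux
open MeasureTheory Filter Set FourierTransform



lemma integrableOn_cexp_Ioi {c : ℂ} (hc : c.re < 0) :
    IntegrableOn (fun x : ℝ ↦ Complex.exp (c * x)) (Ioi 0) := by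
  apply (exp_neg_integrableOn_Ioi 0 (by linarith : (0:ℝ) < -c.re)).mono'
  · exact (Complex.continuous_exp.comp (continuous_const.mul Complex.continuous_ofReal)).aestronglyMeasurable
  · filter_upwards with x
    rw [Complex.norm_exp]
    apply le_of_eq
    simp [Complex.mul_re]

lemma integral_cexp_Ioi {c : ℂ} (hc : c.re < 0) :
    ∫ x in Ioi (0:ℝ), Complex.exp (c * x) = -c⁻¹ := by
  have hc0 : c ≠ 0 := fun h => by simp [h] at hc
  have hd : ∀ x ∈ Ici (0:ℝ), HasDerivAt (fun x : ℝ ↦ c⁻¹ * Complex.exp (c * x))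
      (Complex.exp (c * x)) x := by
    intro x _
    have h1 : HasDerivAt (fun x : ℝ ↦ c * (x:ℂ)) c x := by
      simpa using (Complex.ofRealCLM.hasDerivAt (x := x)).const_mul c
    have h2 := (h1.cexp).const_mul c⁻¹
    convert h2 using 1
    rfl
    rw [mul_comm (Complex.exp _) c, inv_mul_cancel_left₀ hc0]
  have ht : Tendsto (fun x : ℝ ↦ c⁻¹ * Complex.exp (c * x)) atTop (nhds 0) := by
    rw [tendsto_zero_iff_norm_tendsto_zero]
    have : Tendsto (fun x : ℝ ↦ ‖c⁻¹‖ * Real.exp (c.re * x)) atTop (nhds (‖c⁻¹‖ * 0)) := by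
      apply Tendsto.const_mul
      exact Real.tendsto_exp_atBot.comp (tendsto_id.const_mul_atTop_of_neg hc)
    rw [mul_zero] at this
    convert this using 2 with x
    rw [norm_mul]
    congr 1
    rw [Complex.norm_exp]
    congr 1
    simp [Complex.mul_re]
  have := integral_Ioi_of_hasDerivAt_of_tendsto' hd (integrableOn_cexp_Ioi hc) ht
  simpa using this

lemma integrableOn_cexp_Iic {c : ℂ} (hc : 0 < c.re) :
    IntegrableOn (fun x : ℝ ↦ Complex.exp (c * x)) (Iic 0) := by
  have A : MeasurableEmbedding fun x : ℝ => -x :=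
    (Homeomorph.neg ℝ).isClosedEmbedding.measurableEmbedding
  have h := integrableOn_cexp_Ioi (c := -c) (by simpa using hc)
  rw [show (volume : Measure ℝ) = Measure.map (fun x : ℝ => -x) volume from
      (Measure.map_neg_eq_self _).symm, A.integrableOn_map_iff]
  have hfun : (fun x : ℝ ↦ Complex.exp (c * x)) ∘ (fun x : ℝ => -x)
      = fun x : ℝ ↦ Complex.exp (-c * x) := by
    funext x
    simp only [Function.comp_apply, Complex.ofReal_neg]
    ring_nf
  have hs : (fun x : ℝ => -x) ⁻¹' (Iic 0) = Ici 0 := by ext x; simp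
  rw [hfun, hs]
  exact (integrableOn_Ici_iff_integrableOn_Ioi).mpr h

lemma integral_cexp_Iic {c : ℂ} (hc : 0 < c.re) :
    ∫ x in Iic (0:ℝ), Complex.exp (c * x) = c⁻¹ := by
  have h2 : ∀ x : ℝ, -c * ((-x : ℝ) : ℂ) = c * x := by intro x; push_cast; ring
  calc ∫ x in Iic (0:ℝ), Complex.exp (c * x)
      = ∫ x in Iic (0:ℝ), Complex.exp (-c * ((-x : ℝ) : ℂ)) := by
        refine setIntegral_congr_fun measurableSet_Iic fun x _ => by rw [h2]
    _ = ∫ x in Ioi (-(0:ℝ)), Complex.exp (-c * x) := integral_comp_neg_Iic (0:ℝ) (fun y : ℝ ↦ Complex.exp (-c * y))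
    _ = c⁻¹ := by rw [neg_zero, integral_cexp_Ioi (by simpa using hc), inv_neg, neg_neg]

lemma key_alg (lam τ w : ℝ) (hlam : 0 < lam) (hτ : 0 < τ) (hne : lam ≠ τ) :
    (π:ℂ)/lam * ((((2*π*(τ+lam) : ℝ):ℂ) - ((2*π*w : ℝ):ℂ)*Complex.I)⁻¹
      - (((2*π*(τ-lam) : ℝ):ℂ) - ((2*π*w : ℝ):ℂ)*Complex.I)⁻¹)
    = (((w:ℂ) + Complex.I*τ)^2 + (lam:ℂ)^2)⁻¹ := by
  have hπ : (π:ℂ) ≠ 0 := by exact_mod_cast Real.pi_ne_zero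
  have hl : (lam:ℂ) ≠ 0 := by exact_mod_cast hlam.ne'
  have h1 : (((2*π*(τ+lam) : ℝ):ℂ) - ((2*π*w : ℝ):ℂ)*Complex.I) ≠ 0 := by
    intro h
    have := congrArg Complex.re h
    simp at this
    nlinarith [Real.pi_pos]
  have h2 : (((2*π*(τ-lam) : ℝ):ℂ) - ((2*π*w : ℝ):ℂ)*Complex.I) ≠ 0 := by
    intro h
    have := congrArg Complex.re h
    simp at this
    exact hne (by linarith)
  have hD' : (((w:ℂ) + Complex.I*τ)^2 + (lam:ℂ)^2) * (4*(π:ℂ)^2)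
      = -((((2*π*(τ+lam) : ℝ):ℂ) - ((2*π*w : ℝ):ℂ)*Complex.I)
          * ((((2*π*(τ-lam) : ℝ):ℂ) - ((2*π*w : ℝ):ℂ)*Complex.I))) := by
    push_cast
    linear_combination (4*(π:ℂ)^2*((w:ℂ)^2+(τ:ℂ)^2)) * Complex.I_sq
  have hD : (((w:ℂ) + Complex.I*τ)^2 + (lam:ℂ)^2) ≠ 0 := by
    intro h
    rw [h, zero_mul] at hD'
    exact (mul_ne_zero h1 h2) (by simpa [neg_eq_zero] using hD'.symm)
  have h4 : (4*(π:ℂ)^2) ≠ 0 := by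
    simp [hπ]
  have hDval : (((w:ℂ) + Complex.I*τ)^2 + (lam:ℂ)^2)
      = -((((2*π*(τ+lam) : ℝ):ℂ) - ((2*π*w : ℝ):ℂ)*Complex.I)
          * ((((2*π*(τ-lam) : ℝ):ℂ) - ((2*π*w : ℝ):ℂ)*Complex.I))) / (4*(π:ℂ)^2) :=
    (eq_div_iff h4).mpr hD'
  rw [hDval]
  push_cast at h1 h2 ⊢
  rw [inv_sub_inv h1 h2]
  field_simp
  ring

lemma D_repr (lam τ w : ℝ) :
    ((w:ℂ) + Complex.I*τ)^2 + (lam:ℂ)^2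
      = (((w^2 + lam^2 - τ^2 : ℝ)):ℂ) + ((2*τ*w : ℝ):ℂ) * Complex.I := by
  push_cast
  linear_combination ((τ:ℂ)^2) * Complex.I_sq

lemma D_lower (lam τ : ℝ) (hlam : 0 < lam) (hτ : 0 < τ) (hne : lam ≠ τ) :
    ∃ c > 0, ∀ w : ℝ,
      c * (1 + w^2) ≤ ‖((w:ℂ) + Complex.I*τ)^2 + (lam:ℂ)^2‖ := by
  refine ⟨min 1 (min (lam^2+τ^2) |lam^2-τ^2|), ?_, ?_⟩
  · have h1 : (0:ℝ) < |lam^2-τ^2| := by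
      rw [abs_pos]
      intro h
      have : lam^2 = τ^2 := by linarith
      exact hne (by nlinarith)
    positivity
  · intro w
    set c := min 1 (min (lam^2+τ^2) |lam^2-τ^2|) with hc
    have hc0 : 0 ≤ c := by
      have : (0:ℝ) ≤ |lam^2-τ^2| := abs_nonneg _
      positivity
    have hc1 : c ≤ 1 := min_le_left _ _
    have hc2 : c ≤ lam^2+τ^2 := le_trans (min_le_right _ _) (min_le_left _ _)
    have hc3 : c ≤ |lam^2-τ^2| := le_trans (min_le_right _ _) (min_le_right _ _)
    rw [D_repr, Complex.norm_def, Complex.normSq_add_mul_I]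
    rw [Real.le_sqrt (by positivity)]
    have habs : |lam^2-τ^2|^2 = (lam^2-τ^2)^2 := sq_abs _
    have hcsq1 : c^2 ≤ 1 := by nlinarith
    have hcsq2 : c^2 ≤ lam^2+τ^2 := by nlinarith
    have hcsq3 : c^2 ≤ (lam^2-τ^2)^2 := by nlinarith [abs_nonneg (lam^2-τ^2)]
    nlinarith [mul_le_mul_of_nonneg_right hcsq2 (sq_nonneg w),
      mul_le_mul_of_nonneg_right hcsq1 (sq_nonneg (w^2)), sq_nonneg w, sq_nonneg (w^2)]
    positivity

lemma D_ne (lam τ : ℝ) (hlam : 0 < lam) (hτ : 0 < τ) (hne : lam ≠ τ) (w : ℝ) :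
    ((w:ℂ) + Complex.I*τ)^2 + (lam:ℂ)^2 ≠ 0 := by
  obtain ⟨c, hc, hb⟩ := D_lower lam τ hlam hτ hne
  intro h
  have hw := hb w
  rw [h] at hw
  simp at hw
  nlinarith [sq_nonneg w]

lemma G_cont (lam τ : ℝ) (hlam : 0 < lam) (hτ : 0 < τ) (hne : lam ≠ τ) :
    Continuous fun w : ℝ ↦ (((w:ℂ) + Complex.I*τ)^2 + (lam:ℂ)^2)⁻¹ := by
  apply Continuous.inv₀
  · fun_prop
  · exact fun w => D_ne lam τ hlam hτ hne w

lemma G_int (lam τ : ℝ) (hlam : 0 < lam) (hτ : 0 < τ) (hne : lam ≠ τ) :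
    Integrable fun w : ℝ ↦ (((w:ℂ) + Complex.I*τ)^2 + (lam:ℂ)^2)⁻¹ := by
  obtain ⟨c, hc, hb⟩ := D_lower lam τ hlam hτ hne
  apply Integrable.mono' ((integrable_inv_one_add_sq).const_mul c⁻¹)
  · exact (G_cont lam τ hlam hτ hne).aestronglyMeasurable
  · filter_upwards with w
    have h2 : 0 < c * (1+w^2) := by positivity
    rw [norm_inv]
    calc (‖((w:ℂ) + Complex.I*τ)^2 + (lam:ℂ)^2‖)⁻¹
        ≤ (c * (1+w^2))⁻¹ := inv_anti₀ h2 (hb w)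
      _ = c⁻¹ * (1+w^2)⁻¹ := by rw [mul_inv]

lemma main1 (lam τ x : ℝ) (hlam : 0 < lam) (hτ : 0 < τ) (hlt : lam < τ) :
    (∫ ξ : ℝ, Complex.exp (2 * π * Complex.I * x * ξ)
        / ((ξ + Complex.I * τ) ^ 2 + (lam : ℂ) ^ 2))
      = (((π * Real.exp (2 * π * τ * x) / lam)
          * (Real.exp (-2 * π * lam * |x|) - Real.exp (-2 * π * lam * x)) : ℝ) : ℂ) := by
  have hne : lam ≠ τ := hlt.ne
  set H : ℝ → ℂ := fun v ↦ (((π * Real.exp (2 * π * τ * v) / lam)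
      * (Real.exp (-2 * π * lam * |v|) - Real.exp (-2 * π * lam * v)) : ℝ) : ℂ) with hHdef
  have hre1 : (((2*π*(τ+lam) : ℝ):ℂ)).re = 2*π*(τ+lam) := Complex.ofReal_re _
  -- pointwise on Iic
  have ptw : ∀ v : ℝ, v ≤ 0 → H v
      = (π:ℂ)/lam * (Complex.exp (((2*π*(τ+lam) : ℝ):ℂ) * v)
          - Complex.exp (((2*π*(τ-lam) : ℝ):ℂ) * v)) := by
    intro v hv
    have e1 : ((2*π*(τ+lam) : ℝ):ℂ) * v = ((2*π*τ*v : ℝ):ℂ) + ((-2*π*lam*(-v) : ℝ):ℂ) := by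
      push_cast; ring
    have e2 : ((2*π*(τ-lam) : ℝ):ℂ) * v = ((2*π*τ*v : ℝ):ℂ) + ((-2*π*lam*v : ℝ):ℂ) := by
      push_cast; ring
    rw [hHdef]
    simp only [abs_of_nonpos hv]
    rw [e1, e2, Complex.exp_add, Complex.exp_add]
    push_cast
    ring
  have ptw0 : ∀ v : ℝ, 0 < v → H v = 0 := by
    intro v hv
    rw [hHdef]
    simp [abs_of_pos hv]
  have hr1 : (0:ℝ) < (((2*π*(τ+lam) : ℝ):ℂ)).re := by
    rw [Complex.ofReal_re]; positivity
  have hr2 : (0:ℝ) < (((2*π*(τ-lam) : ℝ):ℂ)).re := by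
    rw [Complex.ofReal_re]
    have : 0 < τ - lam := by linarith
    positivity
  have Hcont : Continuous H := by
    rw [hHdef]
    fun_prop
  have iIic : IntegrableOn H (Iic 0) := by
    apply IntegrableOn.congr_fun
      (((integrableOn_cexp_Iic hr1).sub (integrableOn_cexp_Iic hr2)).const_mul ((π:ℂ)/lam))
      (fun v hv => (ptw v hv).symm) measurableSet_Iic
  have iIoi : IntegrableOn H (Ioi 0) := by
    apply IntegrableOn.congr_fun (integrableOn_zero)
      (fun v hv => (ptw0 v hv).symm) measurableSet_Ioi
  have Hint : Integrable H := by
    rw [← integrableOn_univ, ← Iic_union_Ioi (a := (0:ℝ))]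
    exact iIic.union iIoi
  have hFT : ∀ w : ℝ, 𝓕 H w
      = (((w:ℂ) + Complex.I*τ)^2 + (lam:ℂ)^2)⁻¹ := by
    intro w
    have hK : 𝓕 H w
        = ∫ v : ℝ, Complex.exp (((-2*π*(v*w) : ℝ):ℂ) * Complex.I) * H v := by
      rw [Real.fourier_eq']
      simp [RCLike.inner_apply, conj_trivial, smul_eq_mul, mul_comm]
    set c1 : ℂ := ((2*π*(τ+lam) : ℝ):ℂ) - ((2*π*w : ℝ):ℂ)*Complex.I with hc1
    set c2 : ℂ := ((2*π*(τ-lam) : ℝ):ℂ) - ((2*π*w : ℝ):ℂ)*Complex.I with hc2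
    have hc1re : 0 < c1.re := by
      rw [hc1]; simp; positivity
    have hc2re : 0 < c2.re := by
      rw [hc2]; simp
      have h' : 0 < τ - lam := by linarith
      positivity
    have ptwK : ∀ v ∈ Iic (0:ℝ), Complex.exp (((-2*π*(v*w) : ℝ):ℂ) * Complex.I) * H v
        = (π:ℂ)/lam * (Complex.exp (c1 * v) - Complex.exp (c2 * v)) := by
      intro v hv
      rw [ptw v hv]
      have e1 : c1 * v = ((-2*π*(v*w) : ℝ):ℂ) * Complex.I + ((2*π*(τ+lam) : ℝ):ℂ) * v := by
        rw [hc1]; push_cast; ring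
      have e2 : c2 * v = ((-2*π*(v*w) : ℝ):ℂ) * Complex.I + ((2*π*(τ-lam) : ℝ):ℂ) * v := by
        rw [hc2]; push_cast; ring
      rw [e1, e2, Complex.exp_add, Complex.exp_add]
      ring
    have iK1 : IntegrableOn
        (fun v : ℝ ↦ Complex.exp (((-2*π*(v*w) : ℝ):ℂ) * Complex.I) * H v) (Iic 0) :=
      IntegrableOn.congr_fun
        (((integrableOn_cexp_Iic hc1re).sub (integrableOn_cexp_Iic hc2re)).const_mul ((π:ℂ)/lam))
        (fun v hv => (ptwK v hv).symm) measurableSet_Iic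
    have iK2 : IntegrableOn
        (fun v : ℝ ↦ Complex.exp (((-2*π*(v*w) : ℝ):ℂ) * Complex.I) * H v) (Ioi 0) :=
      IntegrableOn.congr_fun integrableOn_zero
        (fun v hv => by simp [ptw0 v hv]) measurableSet_Ioi
    rw [hK, ← intervalIntegral.integral_Iic_add_Ioi iK1 iK2]
    have I2 : (∫ v in Ioi (0:ℝ), Complex.exp (((-2*π*(v*w) : ℝ):ℂ) * Complex.I) * H v) = 0 := by
      rw [setIntegral_congr_fun measurableSet_Ioi (g := fun _ => (0:ℂ))
        (fun v hv => by simp [ptw0 v hv])]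
      simp
    have I1 : (∫ v in Iic (0:ℝ), Complex.exp (((-2*π*(v*w) : ℝ):ℂ) * Complex.I) * H v)
        = (π:ℂ)/lam * (c1⁻¹ - c2⁻¹) := by
      rw [setIntegral_congr_fun measurableSet_Iic ptwK, MeasureTheory.integral_const_mul,
        integral_sub (integrableOn_cexp_Iic hc1re) (integrableOn_cexp_Iic hc2re),
        integral_cexp_Iic hc1re, integral_cexp_Iic hc2re]
    rw [I1, I2, add_zero, hc1, hc2]
    exact key_alg lam τ w hlam hτ hne
  have hFTfun : 𝓕 H
      = fun w : ℝ ↦ (((w:ℂ) + Complex.I*τ)^2 + (lam:ℂ)^2)⁻¹ := funext hFT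
  have hinv := Hint.fourierInv_fourier_eq (v := x)
    (by rw [show 𝓕 H = _ from hFTfun]; exact G_int lam τ hlam hτ hne) Hcont.continuousAt
  rw [show (𝓕 H) = _ from hFTfun] at hinv
  have lhs_eq : (∫ ξ : ℝ, Complex.exp (2 * π * Complex.I * x * ξ)
        / ((ξ + Complex.I * τ) ^ 2 + (lam : ℂ) ^ 2))
      = 𝓕⁻ (fun w : ℝ ↦ (((w:ℂ) + Complex.I*τ)^2 + (lam:ℂ)^2)⁻¹) x := by
    rw [Real.fourierInv_eq']
    simp only [RCLike.inner_apply, conj_trivial, smul_eq_mul]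
    congr 1
    funext v
    rw [div_eq_mul_inv]
    congr 1
    congr 1
    push_cast
    ring
  rw [lhs_eq, hinv]

lemma main2 (lam τ x : ℝ) (hlam : 0 < lam) (hτ : 0 < τ) (hlt : τ < lam) :
    (∫ ξ : ℝ, Complex.exp (2 * π * Complex.I * x * ξ)
        / ((ξ + Complex.I * τ) ^ 2 + (lam : ℂ) ^ 2))
      = (((π * Real.exp (2 * π * τ * x) / lam)
          * Real.exp (-2 * π * lam * |x|) : ℝ) : ℂ) := by
  have hne : lam ≠ τ := hlt.ne'
  set H : ℝ → ℂ := fun v ↦ (((π * Real.exp (2 * π * τ * v) / lam)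
      * Real.exp (-2 * π * lam * |v|) : ℝ) : ℂ) with hHdef
  have ptwL : ∀ v : ℝ, v ≤ 0 → H v
      = (π:ℂ)/lam * Complex.exp (((2*π*(τ+lam) : ℝ):ℂ) * v) := by
    intro v hv
    have e1 : ((2*π*(τ+lam) : ℝ):ℂ) * v = ((2*π*τ*v : ℝ):ℂ) + ((-2*π*lam*(-v) : ℝ):ℂ) := by
      push_cast; ring
    rw [hHdef]
    simp only [abs_of_nonpos hv]
    rw [e1, Complex.exp_add]
    push_cast
    ring
  have ptwR : ∀ v : ℝ, 0 ≤ v → H v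
      = (π:ℂ)/lam * Complex.exp (((2*π*(τ-lam) : ℝ):ℂ) * v) := by
    intro v hv
    have e1 : ((2*π*(τ-lam) : ℝ):ℂ) * v = ((2*π*τ*v : ℝ):ℂ) + ((-2*π*lam*v : ℝ):ℂ) := by
      push_cast; ring
    rw [hHdef]
    simp only [abs_of_nonneg hv]
    rw [e1, Complex.exp_add]
    push_cast
    ring
  have hr1 : (0:ℝ) < (((2*π*(τ+lam) : ℝ):ℂ)).re := by
    rw [Complex.ofReal_re]; positivity
  have hr2 : (((2*π*(τ-lam) : ℝ):ℂ)).re < 0 := by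
    rw [Complex.ofReal_re]
    have h' : τ - lam < 0 := by linarith
    nlinarith [Real.pi_pos]
  have Hcont : Continuous H := by
    rw [hHdef]
    fun_prop
  have iIic : IntegrableOn H (Iic 0) :=
    IntegrableOn.congr_fun ((integrableOn_cexp_Iic hr1).const_mul ((π:ℂ)/lam))
      (fun v hv => (ptwL v hv).symm) measurableSet_Iic
  have iIoi : IntegrableOn H (Ioi 0) :=
    IntegrableOn.congr_fun ((integrableOn_cexp_Ioi hr2).const_mul ((π:ℂ)/lam))
      (fun v hv => (ptwR v (le_of_lt hv)).symm) measurableSet_Ioi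
  have Hint : Integrable H := by
    rw [← integrableOn_univ, ← Iic_union_Ioi (a := (0:ℝ))]
    exact iIic.union iIoi
  have hFT : ∀ w : ℝ, 𝓕 H w
      = (((w:ℂ) + Complex.I*τ)^2 + (lam:ℂ)^2)⁻¹ := by
    intro w
    have hK : 𝓕 H w
        = ∫ v : ℝ, Complex.exp (((-2*π*(v*w) : ℝ):ℂ) * Complex.I) * H v := by
      rw [Real.fourier_eq']
      simp [RCLike.inner_apply, conj_trivial, smul_eq_mul, mul_comm]
    set c1 : ℂ := ((2*π*(τ+lam) : ℝ):ℂ) - ((2*π*w : ℝ):ℂ)*Complex.I with hc1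
    set c2 : ℂ := ((2*π*(τ-lam) : ℝ):ℂ) - ((2*π*w : ℝ):ℂ)*Complex.I with hc2
    have hc1re : 0 < c1.re := by
      rw [hc1]; simp; positivity
    have hc2re : c2.re < 0 := by
      rw [hc2]; simp
      have h' : τ - lam < 0 := by linarith
      nlinarith [Real.pi_pos]
    have ptwK1 : ∀ v ∈ Iic (0:ℝ), Complex.exp (((-2*π*(v*w) : ℝ):ℂ) * Complex.I) * H v
        = (π:ℂ)/lam * Complex.exp (c1 * v) := by
      intro v hv
      rw [ptwL v hv]
      have e1 : c1 * v = ((-2*π*(v*w) : ℝ):ℂ) * Complex.I + ((2*π*(τ+lam) : ℝ):ℂ) * v := by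
        rw [hc1]; push_cast; ring
      rw [e1, Complex.exp_add]
      ring
    have ptwK2 : ∀ v ∈ Ioi (0:ℝ), Complex.exp (((-2*π*(v*w) : ℝ):ℂ) * Complex.I) * H v
        = (π:ℂ)/lam * Complex.exp (c2 * v) := by
      intro v hv
      rw [ptwR v (le_of_lt hv)]
      have e2 : c2 * v = ((-2*π*(v*w) : ℝ):ℂ) * Complex.I + ((2*π*(τ-lam) : ℝ):ℂ) * v := by
        rw [hc2]; push_cast; ring
      rw [e2, Complex.exp_add]
      ring
    have iK1 : IntegrableOn
        (fun v : ℝ ↦ Complex.exp (((-2*π*(v*w) : ℝ):ℂ) * Complex.I) * H v) (Iic 0) :=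
      IntegrableOn.congr_fun ((integrableOn_cexp_Iic hc1re).const_mul ((π:ℂ)/lam))
        (fun v hv => (ptwK1 v hv).symm) measurableSet_Iic
    have iK2 : IntegrableOn
        (fun v : ℝ ↦ Complex.exp (((-2*π*(v*w) : ℝ):ℂ) * Complex.I) * H v) (Ioi 0) :=
      IntegrableOn.congr_fun ((integrableOn_cexp_Ioi hc2re).const_mul ((π:ℂ)/lam))
        (fun v hv => (ptwK2 v hv).symm) measurableSet_Ioi
    rw [hK, ← intervalIntegral.integral_Iic_add_Ioi iK1 iK2]
    have I1 : (∫ v in Iic (0:ℝ), Complex.exp (((-2*π*(v*w) : ℝ):ℂ) * Complex.I) * H v)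
        = (π:ℂ)/lam * c1⁻¹ := by
      rw [setIntegral_congr_fun measurableSet_Iic ptwK1, MeasureTheory.integral_const_mul,
        integral_cexp_Iic hc1re]
    have I2 : (∫ v in Ioi (0:ℝ), Complex.exp (((-2*π*(v*w) : ℝ):ℂ) * Complex.I) * H v)
        = (π:ℂ)/lam * (-c2⁻¹) := by
      rw [setIntegral_congr_fun measurableSet_Ioi ptwK2, MeasureTheory.integral_const_mul,
        integral_cexp_Ioi hc2re]
    rw [I1, I2]
    have : (π:ℂ)/lam * c1⁻¹ + (π:ℂ)/lam * (-c2⁻¹) = (π:ℂ)/lam * (c1⁻¹ - c2⁻¹) := by ring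
    rw [this, hc1, hc2]
    exact key_alg lam τ w hlam hτ hne
  have hFTfun : 𝓕 H
      = fun w : ℝ ↦ (((w:ℂ) + Complex.I*τ)^2 + (lam:ℂ)^2)⁻¹ := funext hFT
  have hinv := Hint.fourierInv_fourier_eq (v := x)
    (by rw [show 𝓕 H = _ from hFTfun]; exact G_int lam τ hlam hτ hne) Hcont.continuousAt
  rw [show (𝓕 H) = _ from hFTfun] at hinv
  have lhs_eq : (∫ ξ : ℝ, Complex.exp (2 * π * Complex.I * x * ξ)
        / ((ξ + Complex.I * τ) ^ 2 + (lam : ℂ) ^ 2))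
      = 𝓕⁻ (fun w : ℝ ↦ (((w:ℂ) + Complex.I*τ)^2 + (lam:ℂ)^2)⁻¹) x := by
    rw [Real.fourierInv_eq']
    simp only [RCLike.inner_apply, conj_trivial, smul_eq_mul]
    congr 1
    funext v
    rw [div_eq_mul_inv]
    congr 1
    congr 1
    push_cast
    ring
  rw [lhs_eq, hinv]

end Stmt7Aux

/-- Explicit evaluation of `g_τ(x,λ) = ∫ e^{2πixξ}/((ξ+iτ)²+λ²) dξ` for `τ > 0`, `λ > 0`,
`λ ≠ τ`, in the two cases `λ < τ` and `λ > τ`. -/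
theorem stmt7 (lam τ x : ℝ) (hlam : 0 < lam) (hτ : 0 < τ) (hne : lam ≠ |τ|) :
    (lam < τ →
      (∫ ξ : ℝ, Complex.exp (2 * π * Complex.I * x * ξ)
          / ((ξ + Complex.I * τ) ^ 2 + (lam : ℂ) ^ 2))
        = (((π * Real.exp (2 * π * τ * x) / lam)
            * (Real.exp (-2 * π * lam * |x|) - Real.exp (-2 * π * lam * x)) : ℝ) : ℂ)) ∧
    (τ < lam →
      (∫ ξ : ℝ, Complex.exp (2 * π * Complex.I * x * ξ)
          / ((ξ + Complex.I * τ) ^ 2 + (lam : ℂ) ^ 2))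
        = (((π * Real.exp (2 * π * τ * x) / lam) * Real.exp (-2 * π * lam * |x|) : ℝ) : ℂ)) :=
  ⟨fun h => main1 lam τ x hlam hτ h, fun h => main2 lam τ x hlam hτ h⟩
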